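/- Let α ∈ (0,1) and let (Q^k)_{k∈ℕ} be any sequence of functions on pairs {(s,a) : s ∈ S, a ∈ A s} such that Q^0(s,a) = r_n if s ∈ Acc and Q^0(s,a) = 0 otherwise, and for every k, Q^{k+1} is obtained from Q^k by updating an arbitrary set of pairs, where each updated pair (s,a) receives the value Q^{k+1}(s,a) = (1 − α)·Q^k(s,a) + α·(R(s') + Γ(s')·max_{a' ∈ A s'} Q^k(s',a')) for some s' ∈ support(P s a), while all other pairs keep their value. Then for every k, every s ∈ S, and every a ∈ A s: if Q^k(s,a) < 0, then there is no policy π such that s ∉ Acc and μ^π_{s'}(Safe) = 1 for every s' ∈ support(P s a); equivalently, the maximum over policies of the probability of satisfying the safety condition when starting at s with first action a is strictly less than 1. -/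

import Mathlib

open MeasureTheory Set
open scoped ENNReal Classical

variable {S : Type*}

def IsPathMeasure [MeasurableSpace S] (P : S → PMF S) (μ : S → Measure (ℕ → S)) : Prop :=
  (∀ s, IsProbabilityMeasure (μ s)) ∧
    ∀ (s : S) (n : ℕ) (x : ℕ → S),
      μ s {ω | ∀ i ≤ n, ω i = x i} =
        (if x 0 = s then 1 else 0) * ∏ i ∈ Finset.range n, (P (x i)) (x (i + 1))

noncomputable def Rw (Acc : Set S) (γacc rn : ℝ) (s : S) : ℝ :=
  if s ∈ Acc then (1 - γacc) * rn else 0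

noncomputable def Γw (Acc : Set S) (γacc γ : ℝ) (s : S) : ℝ :=
  if s ∈ Acc then γacc else γ

noncomputable def Ret (Acc : Set S) (γacc γ rn : ℝ) (ω : ℕ → S) : ℝ :=
  ∑' t : ℕ, Rw Acc γacc rn (ω (t + 1)) * ∏ k ∈ Finset.range t, Γw Acc γacc γ (ω (k + 1))

noncomputable def Val [MeasurableSpace S] (Acc : Set S) (γacc γ rn : ℝ)
    (μ : S → Measure (ℕ → S)) (s : S) : ℝ :=
  ∫ ω, Ret Acc γacc γ rn ω ∂ (μ s)

variable {A : S → Type*}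

noncomputable def Valp [MeasurableSpace S] (Acc : Set S) (γacc γ rn : ℝ)
    (μ : ((s : S) → A s) → S → Measure (ℕ → S)) (π : (s : S) → A s) (s : S) : ℝ :=
  ∫ ω, Ret Acc γacc γ rn ω ∂ (μ π s)

noncomputable def Qp [MeasurableSpace S] [Fintype S]
    (P : (s : S) → A s → PMF S) (Acc : Set S) (γacc γ rn : ℝ)
    (μ : ((s : S) → A s) → S → Measure (ℕ → S)) (π : (s : S) → A s) (s : S) (a : A s) : ℝ :=
  ∑ s' : S, (P s a s').toReal *
    (Rw Acc γacc rn s' + Γw Acc γacc γ s' * Valp Acc γacc γ rn μ π s')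

noncomputable def Qstar [MeasurableSpace S] [Fintype S]
    (P : (s : S) → A s → PMF S) (Acc : Set S) (γacc γ rn : ℝ)
    (μ : ((s : S) → A s) → S → Measure (ℕ → S)) (s : S) (a : A s) : ℝ :=
  ⨆ π : (s' : S) → A s', Qp P Acc γacc γ rn μ π s a

def WinRegion [MeasurableSpace S] (Acc : Set S)
    (μ : ((s : S) → A s) → S → Measure (ℕ → S)) : Set S :=
  {s | ∃ π : (s' : S) → A s', μ π s {ω | ∀ t, ω t ∉ Acc} = 1}

def IsOptimal [MeasurableSpace S] (Acc : Set S) (γacc γ rn : ℝ)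
    (μ : ((s : S) → A s) → S → Measure (ℕ → S)) (πo : (s : S) → A s) : Prop :=
  ∀ s, Valp Acc γacc γ rn μ πo s = ⨆ π : (s' : S) → A s', Valp Acc γacc γ rn μ π s

section QLAux
open Filter

variable {S : Type*} [Fintype S] [MeasurableSpace S] [MeasurableSingletonClass S]

/-- extension of a finite tuple to an infinite path -/
def QLext (n : ℕ) (y : Fin (n + 1) → S) : ℕ → S :=
  fun i => y ⟨min i n, Nat.lt_succ_of_le (min_le_right i n)⟩

lemma QLext_le {n : ℕ} (y : Fin (n + 1) → S) {i : ℕ} (hi : i ≤ n) :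
    QLext n y i = y ⟨i, Nat.lt_succ_of_le hi⟩ := by
  simp [QLext, Nat.min_eq_left hi]

noncomputable def QLTsum (Acc : Set S) (p : S → PMF S) (n : ℕ) (s : S) : ℝ≥0∞ :=
  ∑ y : Fin (n + 1) → S,
    if (y 0 = s ∧ ∀ i, y i ∉ Acc) then ∏ i : Fin n, p (y i.castSucc) (y i.succ) else 0

noncomputable def QLW (Acc : Set S) (p : S → PMF S) : ℕ → S → ℝ≥0∞
  | 0, s => if s ∈ Acc then 0 else 1
  | (n + 1), s => if s ∈ Acc then 0 else ∑ s' : S, p s s' * QLW Acc p n s'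

lemma QLTsum_eq_QLW (Acc : Set S) (p : S → PMF S) :
    ∀ n s, QLTsum Acc p n s = QLW Acc p n s := by
  intro n
  induction n with
  | zero =>
    intro s
    show (∑ y : Fin 1 → S, if (y 0 = s ∧ ∀ i, y i ∉ Acc)
        then ∏ i : Fin 0, p (y i.castSucc) (y i.succ) else 0) = if s ∈ Acc then 0 else 1
    rw [Fintype.sum_eq_single (fun _ => s : Fin 1 → S)]
    · by_cases hs : s ∈ Acc <;> simp [hs]
    · intro y hy
      rw [if_neg]
      rintro ⟨h0, -⟩
      exact hy (funext fun i => by rw [Subsingleton.elim i 0, h0])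
  | succ n ih =>
    intro s
    have pull : ∀ (c : Prop) [Decidable c] (g : (Fin (n + 1) → S) → ℝ≥0∞),
        (∑ z : Fin (n + 1) → S, if c then g z else 0) =
          if c then ∑ z : Fin (n + 1) → S, g z else 0 := by
      intro c _ g; split_ifs <;> simp
    show QLTsum Acc p (n + 1) s = if s ∈ Acc then 0 else ∑ s' : S, p s s' * QLW Acc p n s'
    simp_rw [← ih]
    rw [QLTsum, ← (Fin.consEquiv (fun _ : Fin (n + 2) => S)).sum_comp, Fintype.sum_prod_type]
    have step : ∀ (s₀ : S) (z : Fin (n + 1) → S),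
        (if ((Fin.consEquiv (fun _ : Fin (n + 2) => S)) (s₀, z) 0 = s ∧
            ∀ i, (Fin.consEquiv (fun _ : Fin (n + 2) => S)) (s₀, z) i ∉ Acc)
          then ∏ i : Fin (n + 1),
            p ((Fin.consEquiv (fun _ : Fin (n + 2) => S)) (s₀, z) i.castSucc)
              ((Fin.consEquiv (fun _ : Fin (n + 2) => S)) (s₀, z) i.succ) else 0) =
        if s₀ = s then (if (s₀ ∉ Acc ∧ ∀ i, z i ∉ Acc)
          then p s₀ (z 0) * ∏ i : Fin n, p (z i.castSucc) (z i.succ) else 0) else 0 := by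
      intro s₀ z
      have hcons : ∀ i : Fin (n + 2),
          (Fin.consEquiv (fun _ : Fin (n + 2) => S)) (s₀, z) i = Fin.cons (α := fun _ : Fin (n + 2) => S) s₀ z i := by
        intro i; simp [Fin.consEquiv]
      simp only [hcons]
      have hcond : (Fin.cons (α := fun _ : Fin (n + 2) => S) s₀ z 0 = s ∧ ∀ i, Fin.cons (α := fun _ : Fin (n + 2) => S) s₀ z i ∉ Acc) ↔
          (s₀ = s ∧ (s₀ ∉ Acc ∧ ∀ i, z i ∉ Acc)) := by
        rw [Fin.forall_fin_succ]
        simp [Fin.cons_zero, Fin.cons_succ, and_assoc]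
      have hprod : (∏ i : Fin (n + 1), p (Fin.cons (α := fun _ : Fin (n + 2) => S) s₀ z i.castSucc) (Fin.cons (α := fun _ : Fin (n + 2) => S) s₀ z i.succ)) =
          p s₀ (z 0) * ∏ i : Fin n, p (z i.castSucc) (z i.succ) := by
        rw [Fin.prod_univ_succ]
        refine congrArg₂ (· * ·) (by simp) (Finset.prod_congr rfl fun i _ => ?_)
        rw [← Fin.succ_castSucc]
        simp [Fin.cons_succ]
      rw [hprod]
      by_cases h1 : s₀ = s ∧ s₀ ∉ Acc ∧ ∀ i, z i ∉ Acc
      · rw [if_pos (hcond.mpr h1), if_pos h1.1, if_pos h1.2]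
      · rw [if_neg (fun hc => h1 (hcond.mp hc))]
        by_cases h2 : s₀ = s
        · rw [if_pos h2, if_neg (fun hc => h1 ⟨h2, hc⟩)]
        · rw [if_neg h2]
    simp_rw [step, pull]
    rw [Finset.sum_ite_eq' Finset.univ s]
    simp only [Finset.mem_univ, if_true]
    by_cases hs : s ∈ Acc
    · rw [if_pos hs]
      apply Finset.sum_eq_zero
      intro z _
      rw [if_neg (by tauto)]
    · rw [if_neg hs]
      simp only [hs, not_false_eq_true, true_and]
      simp_rw [QLTsum, Finset.mul_sum, mul_ite, mul_zero, ite_and]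
      rw [Finset.sum_comm]
      refine Finset.sum_congr rfl fun z _ => ?_
      rw [Finset.sum_ite_eq Finset.univ (z 0)]
      simp only [Finset.mem_univ, if_true]

lemma QLmeasurable_cyl (x : ℕ → S) (n : ℕ) :
    MeasurableSet {ω : ℕ → S | ∀ i ≤ n, ω i = x i} := by
  have : {ω : ℕ → S | ∀ i ≤ n, ω i = x i} =
      ⋂ (i : ℕ) (_ : i ≤ n), (fun ω : ℕ → S => ω i) ⁻¹' {x i} := by
    ext ω; simp [Set.mem_iInter]
  rw [this]
  exact MeasurableSet.iInter fun i => MeasurableSet.iInter fun _ =>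
    (measurable_pi_apply i) (measurableSet_singleton _)

lemma QLmeasurable_safeN (Acc : Set S) (n : ℕ) :
    MeasurableSet {ω : ℕ → S | ∀ i ≤ n, ω i ∉ Acc} := by
  have : {ω : ℕ → S | ∀ i ≤ n, ω i ∉ Acc} =
      ⋂ (i : ℕ) (_ : i ≤ n), (fun ω : ℕ → S => ω i) ⁻¹' Accᶜ := by
    ext ω; simp [Set.mem_iInter]
  rw [this]
  exact MeasurableSet.iInter fun i => MeasurableSet.iInter fun _ =>
    (measurable_pi_apply i) (Acc.toFinite.measurableSet.compl)

lemma QLmeasure_safeN (Acc : Set S) (p : S → PMF S) (μ : S → Measure (ℕ → S))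
    (hcyl : ∀ (s : S) (n : ℕ) (x : ℕ → S),
      μ s {ω | ∀ i ≤ n, ω i = x i} =
        (if x 0 = s then 1 else 0) * ∏ i ∈ Finset.range n, p (x i) (x (i + 1)))
    (n : ℕ) (s : S) :
    μ s {ω : ℕ → S | ∀ i ≤ n, ω i ∉ Acc} = QLW Acc p n s := by
  rw [← QLTsum_eq_QLW]
  classical
  set G : Finset (Fin (n + 1) → S) := Finset.univ.filter (fun y => ∀ i, y i ∉ Acc) with hG
  set C : (Fin (n + 1) → S) → Set (ℕ → S) := fun y => {ω | ∀ i ≤ n, ω i = QLext n y i} with hC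
  have hcov : {ω : ℕ → S | ∀ i ≤ n, ω i ∉ Acc} = ⋃ y ∈ G, C y := by
    ext ω
    simp only [Set.mem_iUnion, Set.mem_setOf_eq, hG, Finset.mem_filter, Finset.mem_univ, true_and,
      hC]
    constructor
    · intro h
      refine ⟨fun i : Fin (n + 1) => ω i, fun i => h i (Nat.lt_succ_iff.mp i.2), fun i hi => ?_⟩
      rw [QLext_le _ hi]
    · rintro ⟨y, hy, hωy⟩ i hi
      rw [hωy i hi, QLext_le _ hi]
      exact hy _
  have hdisj : (↑G : Set (Fin (n + 1) → S)).PairwiseDisjoint C := by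
    intro y _ y' _ hne
    refine Set.disjoint_left.mpr fun ω hω hω' => hne ?_
    funext i
    have h1 := hω i.1 (Nat.lt_succ_iff.mp i.2)
    have h2 := hω' i.1 (Nat.lt_succ_iff.mp i.2)
    rw [QLext_le _ (Nat.lt_succ_iff.mp i.2)] at h1 h2
    exact h1.symm.trans h2
  rw [hcov, measure_biUnion_finset hdisj (fun y _ => QLmeasurable_cyl _ n)]
  have hterm : ∀ y ∈ G, μ s (C y) =
      (if y 0 = s then 1 else 0) * ∏ i : Fin n, p (y i.castSucc) (y i.succ) := by
    intro y _
    rw [hC]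
    rw [hcyl s n (QLext n y)]
    have h0 : QLext n y 0 = y 0 := by rw [QLext_le _ (Nat.zero_le n)]; rfl
    rw [h0]
    congr 1
    rw [← Fin.prod_univ_eq_prod_range (fun i => p (QLext n y i) (QLext n y (i + 1)))]
    refine Finset.prod_congr rfl fun i _ => ?_
    rw [QLext_le _ (le_of_lt i.2), QLext_le _ (Nat.succ_le_of_lt i.2)]
    rfl
  rw [Finset.sum_congr rfl hterm, QLTsum, hG]
  rw [Finset.sum_filter]
  refine Finset.sum_congr rfl fun y _ => ?_
  by_cases h1 : ∀ i, y i ∉ Acc <;> by_cases h2 : y 0 = s <;>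
    simp [h1, h2]

lemma QLtendsto (Acc : Set S) (μ : S → Measure (ℕ → S))
    (hprob : ∀ s, IsProbabilityMeasure (μ s)) (s : S) :
    Tendsto (fun n => μ s {ω : ℕ → S | ∀ i ≤ n, ω i ∉ Acc}) atTop
      (nhds (μ s {ω : ℕ → S | ∀ t, ω t ∉ Acc})) := by
  have hiInter : {ω : ℕ → S | ∀ t, ω t ∉ Acc} =
      ⋂ n, {ω : ℕ → S | ∀ i ≤ n, ω i ∉ Acc} := by
    ext ω
    simp only [Set.mem_iInter, Set.mem_setOf_eq]
    exact ⟨fun h n i _ => h i, fun h t => h t t le_rfl⟩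
  rw [hiInter]
  exact tendsto_measure_iInter_atTop (fun n => (QLmeasurable_safeN Acc n).nullMeasurableSet)
    (fun m k hmk ω hω i hi => hω i (le_trans hi hmk))
    ⟨0, by have := hprob s; exact measure_ne_top _ _⟩

lemma QLsafe_succ (Acc : Set S) (p : S → PMF S) (μ : S → Measure (ℕ → S))
    (hprob : ∀ s, IsProbabilityMeasure (μ s))
    (hcyl : ∀ (s : S) (n : ℕ) (x : ℕ → S),
      μ s {ω | ∀ i ≤ n, ω i = x i} =
        (if x 0 = s then 1 else 0) * ∏ i ∈ Finset.range n, p (x i) (x (i + 1)))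
    (s : S) (h1 : μ s {ω : ℕ → S | ∀ t, ω t ∉ Acc} = 1) :
    s ∉ Acc ∧ ∀ s' ∈ (p s).support, μ s' {ω : ℕ → S | ∀ t, ω t ∉ Acc} = 1 := by
  have hsub : ∀ s₀ : S, μ s₀ {ω : ℕ → S | ∀ t, ω t ∉ Acc} ≤
      μ s₀ {ω : ℕ → S | ∀ i ≤ 0, ω i ∉ Acc} :=
    fun s₀ => measure_mono fun ω hω i _ => hω i
  have hsAcc : s ∉ Acc := by
    intro hs
    have h0 := QLmeasure_safeN Acc p μ hcyl 0 s
    rw [show QLW Acc p 0 s = if s ∈ Acc then 0 else 1 from rfl, if_pos hs] at h0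
    have := le_trans (le_of_eq h1.symm) (le_trans (hsub s) (le_of_eq h0))
    exact absurd this (by norm_num)
  refine ⟨hsAcc, ?_⟩
  set m : S → ℝ≥0∞ := fun s' => μ s' {ω : ℕ → S | ∀ t, ω t ∉ Acc} with hm
  have hstep : ∀ n : ℕ, μ s {ω : ℕ → S | ∀ i ≤ n + 1, ω i ∉ Acc} =
      ∑ s' : S, p s s' * μ s' {ω : ℕ → S | ∀ i ≤ n, ω i ∉ Acc} := by
    intro n
    rw [QLmeasure_safeN Acc p μ hcyl (n + 1) s,
      show QLW Acc p (n + 1) s = if s ∈ Acc then 0 else ∑ s' : S, p s s' * QLW Acc p n s'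
        from rfl, if_neg hsAcc]
    exact Finset.sum_congr rfl fun s' _ => by rw [QLmeasure_safeN Acc p μ hcyl n s']
  have hL : Tendsto (fun n => μ s {ω : ℕ → S | ∀ i ≤ n + 1, ω i ∉ Acc}) atTop (nhds 1) := by
    have := (QLtendsto Acc μ hprob s).comp (tendsto_add_atTop_nat 1)
    rwa [h1] at this
  have hR : Tendsto (fun n => ∑ s' : S, p s s' * μ s' {ω : ℕ → S | ∀ i ≤ n, ω i ∉ Acc}) atTop
      (nhds (∑ s' : S, p s s' * m s')) := by
    refine tendsto_finset_sum _ fun s' _ => ?_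
    exact ENNReal.Tendsto.const_mul (QLtendsto Acc μ hprob s') (Or.inr (PMF.apply_ne_top _ _))
  have key : (1 : ℝ≥0∞) = ∑ s' : S, p s s' * m s' := by
    refine tendsto_nhds_unique ?_ hR
    exact (funext hstep : _) ▸ hL
  have hm1 : ∀ s', m s' ≤ 1 := fun s' => prob_le_one
  have hsum : ∑ s' : S, p s s' * m s' + ∑ s' : S, p s s' * (1 - m s') = 1 := by
    rw [← Finset.sum_add_distrib]
    have : ∀ s' : S, p s s' * m s' + p s s' * (1 - m s') = p s s' := by
      intro s'
      rw [← mul_add, add_comm, tsub_add_cancel_of_le (hm1 s'), mul_one]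
    rw [Finset.sum_congr rfl fun s' _ => this s', ← tsum_fintype (L := SummationFilter.unconditional S)]
    exact (p s).tsum_coe
  have hzero : ∑ s' : S, p s s' * (1 - m s') = 0 := by
    have := hsum
    rw [← key] at this
    exact (ENNReal.add_right_inj ENNReal.one_ne_top).mp (by rw [this, add_zero])
  intro s' hs'
  have := (Finset.sum_eq_zero_iff.mp hzero) s' (Finset.mem_univ s')
  rcases mul_eq_zero.mp this with h | h
  · exact absurd h hs'
  · exact le_antisymm (hm1 s') (tsub_eq_zero_iff_le.mp h)

end QLAux

/-- along the Q-learning iterates of Algorithm 2, every state-action pair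
whose learned value becomes negative is not a winning pair: no policy keeps the chain
almost surely safe from every state in the support of `P s a` while `s` is safe. -/
theorem qlearning_negative_value_not_winning_pair
    [Fintype S] [Nonempty S] [MeasurableSpace S] [MeasurableSingletonClass S]
    [∀ s, Fintype (A s)] [∀ s, Nonempty (A s)]
    (P : (s : S) → A s → PMF S) (Acc : Set S)
    (habs : ∀ s ∈ Acc, ∀ a : A s, (P s a).support ⊆ Acc)
    (μ : ((s : S) → A s) → S → Measure (ℕ → S))
    (hμ : ∀ π : (s : S) → A s, IsPathMeasure (fun s => P s (π s)) (μ π))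
    (rn γ γacc : ℝ) (hrn : rn < 0) (hγ : 0 < γ ∧ γ < 1) (hγacc : 0 < γacc ∧ γacc < 1)
    (α : ℝ) (hα : 0 < α ∧ α < 1)
    (Q : ℕ → (s : S) → A s → ℝ)
    (h0 : ∀ (s : S) (a : A s), Q 0 s a = if s ∈ Acc then rn else 0)
    (hupd : ∀ (k : ℕ) (s : S) (a : A s),
      Q (k + 1) s a = Q k s a ∨
        ∃ s' ∈ (P s a).support,
          Q (k + 1) s a = (1 - α) * Q k s a +
            α * (Rw Acc γacc rn s' + Γw Acc γacc γ s' * (⨆ a' : A s', Q k s' a'))) :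
    ∀ (k : ℕ) (s : S) (a : A s), Q k s a < 0 →
      ¬ ∃ π : (s : S) → A s, s ∉ Acc ∧
        ∀ s' ∈ (P s a).support, μ π s' {ω | ∀ t, ω t ∉ Acc} = 1 := by
  have main : ∀ (k : ℕ) (s : S) (a : A s),
      (∃ π : (s : S) → A s, s ∉ Acc ∧
        ∀ s' ∈ (P s a).support, μ π s' {ω | ∀ t, ω t ∉ Acc} = 1) → 0 ≤ Q k s a := by
    intro k
    induction k with
    | zero =>
      rintro s a ⟨π, hs, -⟩
      rw [h0, if_neg hs]
    | succ k ih =>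
      rintro s a ⟨π, hs, hsafe⟩
      rcases hupd k s a with he | ⟨s', hs', he⟩
      · rw [he]; exact ih s a ⟨π, hs, hsafe⟩
      · obtain ⟨hs'Acc, hsucc⟩ := QLsafe_succ Acc (fun t => P t (π t)) (μ π)
          (hμ π).1 (hμ π).2 s' (hsafe s' hs')
        have hQ : 0 ≤ Q k s' (π s') := ih s' (π s') ⟨π, hs'Acc, hsucc⟩
        have hsup : 0 ≤ ⨆ a', Q k s' a' :=
          le_trans hQ (le_ciSup (Set.finite_range _).bddAbove (π s'))
        have hQsa : 0 ≤ Q k s a := ih s a ⟨π, hs, hsafe⟩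
        rw [he, Rw, Γw, if_neg hs'Acc, if_neg hs'Acc, zero_add]
        have h1 : (0:ℝ) ≤ (1 - α) * Q k s a := mul_nonneg (by linarith [hα.2]) hQsa
        have h2 : (0:ℝ) ≤ α * (γ * ⨆ a', Q k s' a') :=
          mul_nonneg hα.1.le (mul_nonneg hγ.1.le hsup)
        linarith
  intro k s a hneg hcon
  exact absurd (main k s a hcon) (not_le.mpr hneg)
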